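/- Let p be an odd prime, q a power of p, and t ∈ F_q. Then the number of (p−1)-tuples (x₁,…,x_{p−1}) ∈ F_q^{p−1} satisfying Σ_{j=1}^{p−1} x_j = −t and Σ_{j=1}^{p−1} x_j² = −t² equals q^{p−3}. Consequently, in a tree in which every vertex has degree p, for adjacent vertices e₀ ~ e₁ and prescribed values s at e₀ and u at e₁ (with t = u − s), the set of local solutions of the holomorphicity equations at e₁ on N(e₁) has cardinality q^{p−3}. -/

import Mathlib

open Finset

section Auxiliary

variable {F : Type*} [Field F] [Fintype F] [DecidableEq F]

lemma card_sqrts_filter (hF : ringChar F ≠ 2) (d : F) :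
    (((univ.filter fun z : F => z ^ 2 = d).card : ℤ)) = quadraticChar F d + 1 := by
  rw [← quadraticChar_card_sqrts hF d]
  congr 2
  rw [Set.toFinset_setOf]

lemma card_affine_sqrts (hF : ringChar F ≠ 2) {a : F} (ha : a ≠ 0) (b d : F) :
    (((univ.filter fun w : F => (a * w + b) ^ 2 = d).card : ℤ)) = quadraticChar F d + 1 := by
  rw [← card_sqrts_filter hF d]
  congr 1
  apply Finset.card_nbij' (fun w => a * w + b) (fun z => a⁻¹ * (z - b))
  · intro w hw
    simpa using (mem_filter.mp hw).2
  · intro z hz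
    simp only [mem_filter, mem_univ, true_and] at hz ⊢
    have : a * (a⁻¹ * (z - b)) + b = z := by field_simp; ring
    simpa [this, ha] using hz
  · intro w _
    field_simp
    ring
  · intro z _
    field_simp
    ring

lemma sum_chi_sq (hF : ringChar F ≠ 2) :
    ∑ z : F, quadraticChar F (z ^ 2) = (Fintype.card F : ℤ) - 1 := by
  have h : ∀ z : F, quadraticChar F (z ^ 2) = if z = 0 then 0 else 1 := by
    intro z
    split
    · simp [*]
    · exact quadraticChar_sq_one' (by assumption)
  simp only [h]
  rw [Finset.sum_ite, Finset.sum_const, Finset.sum_const]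
  simp only [smul_zero, smul_eq_mul, mul_one, zero_add, Finset.filter_ne']
  rw [Finset.card_erase_of_mem (mem_univ 0), card_univ, nsmul_eq_mul, mul_one]
  rw [Nat.cast_sub Fintype.card_pos, Nat.cast_one]

lemma sum_chi_shift_zero (hF : ringChar F ≠ 2) (e : F) :
    ∑ a : F, quadraticChar F (a + e) = 0 := by
  rw [← quadraticChar_sum_zero hF]
  exact Fintype.sum_bijective (fun a : F => a + e)
    (Equiv.addRight e).bijective _ _ (fun a => rfl)

lemma sum_chi_mul_shift (hF : ringChar F ≠ 2) {e : F} (he : e ≠ 0) :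
    ∑ a : F, quadraticChar F a * quadraticChar F (a + e) = -1 := by
  have hbij : Function.Bijective (fun x : F => -e * x) :=
    (Equiv.mulLeft₀ (-e) (neg_ne_zero.mpr he)).bijective
  rw [← Fintype.sum_bijective _ hbij _ _ (fun x => rfl)]
  have hne1 : (-1 : F) ≠ 0 := neg_ne_zero.mpr one_ne_zero
  have key : ∀ x : F, quadraticChar F (-e * x) * quadraticChar F (-e * x + e)
      = quadraticChar F (-1) * (quadraticChar F x * quadraticChar F (1 - x)) := by
    intro x
    have h2 : quadraticChar F (-e) * quadraticChar F e = quadraticChar F (-1) := by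
      rw [← map_mul]
      have : -e * e = -1 * e ^ 2 := by ring
      rw [this, map_mul, quadraticChar_sq_one' he, mul_one]
    have h1 : -e * x + e = e * (1 - x) := by ring
    rw [h1, map_mul, map_mul, mul_mul_mul_comm, h2]
  simp only [key]
  rw [← Finset.mul_sum]
  have hj : ∑ x : F, quadraticChar F x * quadraticChar F (1 - x) = -quadraticChar F (-1) := by
    have h := jacobiSum_nontrivial_inv (quadraticChar_ne_one hF)
    rwa [(quadraticChar_isQuadratic F).inv, jacobiSum] at h
  rw [hj]
  have hsq := quadraticChar_sq_one (F := F) hne1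
  nlinarith [hsq]

lemma sum_chi_sq_add (hF : ringChar F ≠ 2) {e : F} (he : e ≠ 0) :
    ∑ z : F, quadraticChar F (z ^ 2 + e) = -1 := by
  have fib := Finset.sum_fiberwise (univ : Finset F) (fun z : F => z ^ 2)
    (fun z : F => quadraticChar F (z ^ 2 + e))
  rw [← fib]
  have step : ∀ a : F, ∑ z ∈ univ.filter (fun z : F => z ^ 2 = a),
      quadraticChar F (z ^ 2 + e)
      = ((univ.filter fun z : F => z ^ 2 = a).card : ℤ) * quadraticChar F (a + e) := by
    intro a
    rw [Finset.sum_congr rfl (fun z hz => by rw [(mem_filter.mp hz).2]),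
      Finset.sum_const, nsmul_eq_mul]
  simp only [step, card_sqrts_filter hF]
  have expand : ∀ a : F, (quadraticChar F a + 1) * quadraticChar F (a + e)
      = quadraticChar F a * quadraticChar F (a + e) + quadraticChar F (a + e) := by
    intro a; ring
  simp only [expand]
  rw [Finset.sum_add_distrib, sum_chi_mul_shift hF he, sum_chi_shift_zero hF e]
  norm_num

lemma sum_pi_succ {M : Type*} [AddCommMonoid M] (n : ℕ) (f : (Fin (n+1) → F) → M) :
    ∑ v : Fin (n+1) → F, f v = ∑ w : F, ∑ u : Fin n → F, f (Fin.cons w u) := by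
  rw [← ((Fin.consEquiv fun _ : Fin (n+1) => F)).sum_comp, Fintype.sum_prod_type]
  rfl

lemma natCast_ne_zero_of_lt (p : ℕ) [CharP F p] (K : ℕ)
    (h1 : 0 < K) (h2 : K < p) : ((K : ℕ) : F) ≠ 0 := by
  rw [Ne, CharP.cast_eq_zero_iff F p]
  intro hd
  exact absurd (Nat.le_of_dvd h1 hd) (by omega)

lemma main_induction (p : ℕ) (hp : p.Prime) [CharP F p] (hF : ringChar F ≠ 2) :
    ∀ K : ℕ, 1 ≤ K → K ≤ p - 2 →
      (Odd K → ((univ.filter fun v : Fin K → F =>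
          (∑ j, v j) ^ 2 = ((K + 1 : ℕ) : F) * ∑ j, v j ^ 2).card : ℤ)
          = (Fintype.card F : ℤ) ^ (K - 1)) ∧
      (Even K → ∑ v : Fin K → F,
          quadraticChar F ((∑ j, v j) ^ 2 - ((K + 1 : ℕ) : F) * ∑ j, v j ^ 2) = 0) := by
  intro K hK1
  induction K, hK1 using Nat.le_induction with
  | base =>
    intro _
    constructor
    · intro _
      have hiff : ∀ v : Fin 1 → F,
          ((∑ j, v j) ^ 2 = ((1 + 1 : ℕ) : F) * ∑ j, v j ^ 2) ↔ v = 0 := by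
        intro v
        rw [Fin.sum_univ_one, Fin.sum_univ_one]
        constructor
        · intro h
          push_cast at h
          have h2 : v 0 ^ 2 = 0 := by linear_combination -h
          funext j
          rw [Subsingleton.elim j 0]
          exact pow_eq_zero_iff (two_ne_zero) |>.mp h2
        · rintro rfl
          push_cast
          simp
      simp only [hiff]
      rw [Finset.filter_eq' univ (0 : Fin 1 → F)]
      simp
    · intro h
      exact absurd h (by decide)
  | succ K hK ih =>
    intro hK2
    have ihAB := ih (by omega)
    have hplarge : 2 ≤ p := hp.two_le
    have ha : ((K + 1 : ℕ) : F) ≠ 0 := natCast_ne_zero_of_lt p _ (by omega) (by omega)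
    have hb : ((K + 2 : ℕ) : F) ≠ 0 := natCast_ne_zero_of_lt p _ (by omega) (by omega)
    obtain ⟨a, ha_def⟩ : ∃ a : F, ((K + 1 : ℕ) : F) = a := ⟨_, rfl⟩
    rw [ha_def] at ha
    have hcast : ((K + 1 + 1 : ℕ) : F) = a + 1 := by rw [← ha_def]; push_cast; ring
    have hb' : a + 1 ≠ 0 := by
      rw [← hcast]; exact hb
    have hconsum : ∀ (w : F) (u : Fin K → F),
        (∑ j, (Fin.cons w u : Fin (K+1) → F) j) = w + ∑ j, u j :=
      fun w u => Fin.sum_cons w u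
    have hconsq : ∀ (w : F) (u : Fin K → F),
        (∑ j, ((Fin.cons w u : Fin (K+1) → F) j) ^ 2) = w ^ 2 + ∑ j, (u j) ^ 2 := by
      intro w u
      calc ∑ j, ((Fin.cons w u : Fin (K+1) → F) j) ^ 2
          = ∑ j, (Fin.cons (w ^ 2) (fun i => (u i) ^ 2) : Fin (K+1) → F) j := by
            refine Finset.sum_congr rfl fun j _ => ?_
            refine Fin.cases ?_ ?_ j <;> simp
        _ = _ := Fin.sum_cons _ _
    have key : ∀ w S S2 : F, (-a) * ((w + S) ^ 2 - (a + 1) * (w ^ 2 + S2))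
        = (a * w + -S) ^ 2 - (a + 1) * (S ^ 2 - a * S2) := by
      intro w S S2; ring
    have quad_iff : ∀ w S S2 : F,
        ((w + S) ^ 2 = (a + 1) * (w ^ 2 + S2)) ↔
        ((a * w + -S) ^ 2 = (a + 1) * (S ^ 2 - a * S2)) := by
      intro w S S2
      rw [← sub_eq_zero, ← sub_eq_zero (a := (a * w + -S) ^ 2), ← key w S S2, mul_eq_zero]
      simp [neg_eq_zero, ha]
    constructor
    · -- odd case
      intro hodd
      have hKeven : Even K := by
        rcases hodd with ⟨m, hm⟩; exact ⟨m, by omega⟩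
      have hBeven := ihAB.2 hKeven
      rw [ha_def] at hBeven
      rw [Finset.card_filter, Nat.cast_sum]
      simp only [Nat.cast_ite, Nat.cast_one, Nat.cast_zero]
      rw [sum_pi_succ]
      simp only [hconsum, hconsq, hcast]
      have hiff2 : ∀ (w : F) (u : Fin K → F),
          ((w + ∑ j, u j) ^ 2 = (a + 1) * (w ^ 2 + ∑ j, u j ^ 2)) ↔
          ((a * w + -(∑ j, u j)) ^ 2
            = (a + 1) * ((∑ j, u j) ^ 2 - a * ∑ j, u j ^ 2)) :=
        fun w u => quad_iff w _ _
      simp only [hiff2]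
      rw [Finset.sum_comm]
      have hsumw : ∀ (b d : F), ∑ w : F, (if (a * w + b) ^ 2 = d then (1:ℤ) else 0)
          = quadraticChar F d + 1 := by
        intro b d
        rw [Finset.sum_boole]
        exact card_affine_sqrts hF ha b d
      simp only [hsumw]
      rw [Finset.sum_add_distrib]
      simp only [map_mul]
      rw [← Finset.mul_sum]
      have : (∑ u : Fin K → F,
          quadraticChar F ((∑ j, u j) ^ 2 - a * ∑ j, u j ^ 2)) = 0 := hBeven
      rw [this, mul_zero, zero_add, Finset.sum_const, card_univ]
      simp [Fintype.card_fun]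
    · -- even case
      intro heven
      have hKodd : Odd K := by
        rcases heven with ⟨m, hm⟩; exact ⟨m - 1, by omega⟩
      have hAodd := ihAB.1 hKodd
      rw [ha_def] at hAodd
      rw [sum_pi_succ]
      have hptw : ∀ (w : F) (u : Fin K → F),
          (∑ j, (Fin.cons w u : Fin (K+1) → F) j) ^ 2
            - ((K + 1 + 1 : ℕ) : F) * ∑ j, ((Fin.cons w u : Fin (K+1) → F) j) ^ 2
          = (-a⁻¹) * ((a * w + -(∑ j, u j)) ^ 2
              - (a + 1) * ((∑ j, u j) ^ 2 - a * ∑ j, (u j) ^ 2)) := by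
        intro w u
        rw [hconsum, hconsq, hcast]
        field_simp
        ring
      simp only [hptw, map_mul]
      rw [Finset.sum_comm]
      have hreix : ∀ (b D : F), ∑ w : F, quadraticChar F ((a * w + b) ^ 2 - D)
          = ∑ z : F, quadraticChar F (z ^ 2 - D) := by
        intro b D
        have hbij : Function.Bijective (fun w : F => a * w + b) := by
          refine Function.bijective_iff_has_inverse.mpr
            ⟨fun z => a⁻¹ * (z - b), fun w => ?_, fun z => ?_⟩ <;> field_simp <;> ring
        exact Fintype.sum_bijective _ hbij _ _ fun w => rfl
      have hinner : ∀ (D : F), ∑ z : F, quadraticChar F (z ^ 2 - D)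
          = if D = 0 then ((Fintype.card F : ℤ) - 1) else -1 := by
        intro D
        split
        · next h => rw [h]; simpa using sum_chi_sq hF
        · next h =>
          have h' : -D ≠ 0 := neg_ne_zero.mpr h
          simpa [sub_eq_add_neg] using sum_chi_sq_add hF h'
      -- now assemble
      calc ∑ u : Fin K → F, ∑ w : F, quadraticChar F (-a⁻¹)
              * quadraticChar F ((a * w + -(∑ j, u j)) ^ 2
                - (a + 1) * ((∑ j, u j) ^ 2 - a * ∑ j, (u j) ^ 2))
          = ∑ u : Fin K → F, quadraticChar F (-a⁻¹)
              * (if (a + 1) * ((∑ j, u j) ^ 2 - a * ∑ j, (u j) ^ 2) = 0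
                  then ((Fintype.card F : ℤ) - 1) else -1) := by
            refine Finset.sum_congr rfl fun u _ => ?_
            rw [← Finset.mul_sum, hreix, hinner]
        _ = quadraticChar F (-a⁻¹) * ∑ u : Fin K → F,
              (if (∑ j, u j) ^ 2 = a * ∑ j, (u j) ^ 2
                  then ((Fintype.card F : ℤ) - 1) else -1) := by
            rw [Finset.mul_sum]
            refine Finset.sum_congr rfl fun u _ => ?_
            congr 1
            refine if_congr ?_ rfl rfl
            rw [mul_eq_zero, sub_eq_zero]
            simp [hb']
        _ = 0 := by
            have hsplit : ∀ u : Fin K → F,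
                (if (∑ j, u j) ^ 2 = a * ∑ j, (u j) ^ 2
                    then ((Fintype.card F : ℤ) - 1) else -1)
                = (Fintype.card F : ℤ) * (if (∑ j, u j) ^ 2 = a * ∑ j, (u j) ^ 2
                    then (1:ℤ) else 0) - 1 := by
              intro u; split <;> ring
            simp only [hsplit]
            rw [Finset.sum_sub_distrib, ← Finset.mul_sum, Finset.sum_boole,
              Finset.sum_const, card_univ]
            have hcard : ((univ.filter fun u : Fin K → F =>
                (∑ j, u j) ^ 2 = a * ∑ j, (u j) ^ 2).card : ℤ)
                = (Fintype.card F : ℤ) ^ (K - 1) := hAodd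
            rw [hcard]
            have hKpow : (Fintype.card F : ℤ) * (Fintype.card F : ℤ) ^ (K - 1)
                = (Fintype.card F : ℤ) ^ K := by
              have h1 : K - 1 + 1 = K := Nat.succ_pred_eq_of_pos hK
              calc (Fintype.card F : ℤ) * (Fintype.card F : ℤ) ^ (K - 1)
                  = (Fintype.card F : ℤ) ^ (K - 1 + 1) := (pow_succ' _ _).symm
                _ = (Fintype.card F : ℤ) ^ K := by rw [h1]
            rw [hKpow]
            simp [Fintype.card_fun]

end Auxiliary

/-- for an odd prime `p`, a finite field `F_q` of characteristic `p`
(so `q` is a power of `p`), and `t ∈ F_q`, the number of `(p-1)`-tuples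
`(x₁, …, x_{p-1})` with `∑ xⱼ = -t` and `∑ xⱼ² = -t²` equals `q^(p-3)`.
(These tuples are exactly the local solutions at `e₁` of the holomorphicity equations
in a `p`-regular tree, for adjacent vertices `e₀ ~ e₁` with prescribed values `s` at
`e₀` and `u` at `e₁`, where `t = u - s`.) -/
theorem card_local_holomorphic_solutions_char_p
    {F : Type*} [Field F] [Fintype F] (p : ℕ) (hp : p.Prime) (hodd : Odd p)
    [CharP F p] (t : F) :
    Nat.card {x : Fin (p - 1) → F //
        (∑ j, x j) = -t ∧ (∑ j, (x j) ^ 2) = -t ^ 2} =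
      (Fintype.card F) ^ (p - 3) := by
  classical
  have hp3 : 3 ≤ p := by
    have h2 := hp.two_le
    rcases hodd with ⟨m, hm⟩
    omega
  obtain ⟨n, rfl⟩ : ∃ n, p = n + 3 := ⟨p - 3, by omega⟩
  have hpodd : Odd (n + 3) := hodd
  have hF2 : ringChar F ≠ 2 := by
    rw [ringChar.eq F (n + 3)]
    rcases hpodd with ⟨m, hm⟩
    omega
  have hn2 : ((n + 2 : ℕ) : F) = -1 := by
    have h0 : ((n + 3 : ℕ) : F) = 0 := CharP.cast_eq_zero F (n + 3)
    push_cast at h0 ⊢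
    linear_combination h0
  show Nat.card {x : Fin (n + 2) → F //
      (∑ j, x j) = -t ∧ (∑ j, (x j) ^ 2) = -t ^ 2} = (Fintype.card F) ^ n
  -- sum shift facts
  have hsum_shift : ∀ (x : Fin (n+2) → F) (c : F),
      ∑ j, (x j - c) = (∑ j, x j) + c := by
    intro x c
    rw [Finset.sum_sub_distrib, Finset.sum_const, card_univ, Fintype.card_fin,
      nsmul_eq_mul, hn2]
    ring
  have hsum_shift_sq : ∀ (x : Fin (n+2) → F) (c : F),
      ∑ j, (x j - c) ^ 2 = (∑ j, x j ^ 2) - 2 * c * (∑ j, x j) - c ^ 2 := by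
    intro x c
    calc ∑ j, (x j - c) ^ 2 = ∑ j, (x j ^ 2 - 2 * c * x j + c ^ 2) :=
          Finset.sum_congr rfl fun j _ => by ring
      _ = _ := by
        rw [Finset.sum_add_distrib, Finset.sum_sub_distrib, ← Finset.mul_sum,
          Finset.sum_const, card_univ, Fintype.card_fin, nsmul_eq_mul, hn2]
        ring
  -- translation equivalence
  have e1 : {x : Fin (n + 2) → F // (∑ j, x j) = -t ∧ (∑ j, (x j) ^ 2) = -t ^ 2}
      ≃ {x : Fin (n + 2) → F // (∑ j, x j) = 0 ∧ (∑ j, (x j) ^ 2) = 0} := by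
    refine Equiv.subtypeEquiv (Equiv.subRight (fun _ => t)) fun x => ?_
    simp only [Equiv.subRight_apply, Pi.sub_apply]
    rw [hsum_shift, hsum_shift_sq]
    constructor
    · rintro ⟨h1, h2⟩
      constructor
      · rw [h1]; ring
      · rw [h1, h2]; ring
    · rintro ⟨h1, h2⟩
      constructor
      · linear_combination h1
      · linear_combination h2 + 2 * t * h1
  rw [Nat.card_congr e1]
  -- elimination equivalence
  have hn2' : ((n + 1 + 1 : ℕ) : F) = -1 := by exact_mod_cast hn2
  have e2 : {x : Fin (n + 2) → F // (∑ j, x j) = 0 ∧ (∑ j, (x j) ^ 2) = 0}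
      ≃ {u : Fin (n + 1) → F //
          (∑ j, u j) ^ 2 = ((n + 1 + 1 : ℕ) : F) * ∑ j, u j ^ 2} := by
    refine ⟨fun x => ⟨Fin.init x.1, ?_⟩, fun u => ⟨Fin.snoc u.1 (-(∑ j, u.1 j)), ?_⟩, ?_, ?_⟩
    · obtain ⟨x, h1, h2⟩ := x
      rw [Fin.sum_univ_castSucc] at h1 h2
      have hlast : x (Fin.last (n+1)) = -(∑ j : Fin (n+1), x j.castSucc) := by
        linear_combination h1
      rw [hn2']
      have : ∀ j : Fin (n+1), Fin.init x j = x j.castSucc := fun j => rfl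
      simp only [this]
      rw [hlast] at h2
      linear_combination h2
    · obtain ⟨u, hu⟩ := u
      rw [hn2'] at hu
      constructor
      · rw [Fin.sum_univ_castSucc]
        simp only [Fin.snoc_castSucc, Fin.snoc_last]
        ring
      · rw [Fin.sum_univ_castSucc]
        simp only [Fin.snoc_castSucc, Fin.snoc_last]
        linear_combination hu
    · rintro ⟨x, h1, h2⟩
      ext j
      simp only
      rw [show (∑ j : Fin (n+1), Fin.init x j) = ∑ j : Fin (n+1), x j.castSucc from rfl]
      rw [Fin.sum_univ_castSucc] at h1
      have hlast : x (Fin.last (n+1)) = -(∑ j : Fin (n+1), x j.castSucc) := by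
        linear_combination h1
      rw [← hlast, Fin.snoc_init_self]
    · rintro ⟨u, hu⟩
      ext j
      simp [Fin.init_snoc]
  rw [Nat.card_congr e2]
  -- apply the induction lemma
  have hodd' : Odd (n + 1) := by
    rcases hpodd with ⟨m, hm⟩
    exact ⟨m - 1, by omega⟩
  have hmain := (main_induction (n + 3) hp hF2 (n + 1) (by omega) (by omega)).1 hodd'
  rw [Nat.card_eq_fintype_card, Fintype.card_subtype]
  exact_mod_cast hmain
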